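/- Fix λ > 0, r > 0 and a > 1/(λr). Let k_n = ⌊n(1 - a log n / n)⌋. For independent exponential spacings Y_{i,n} of rate (n-i)λ, i = 1,...,n-1, the probability that some spacing among i = 1,...,k_n - 1 exceeds r is at most ∑_{i=1}^{k_n - 1} e^{-λr(n-i)} = (e^{λr}/(e^{λr}-1))(e^{-λr(n-k_n)} - e^{-λrn}), and this bound is summable over n; hence by Borel–Cantelli, almost surely the restriction of the exponential RGG to its first k_n ordered points is connected for all sufficiently large n. -/

import Mathlib

open MeasureTheory ProbabilityTheory Real Filter Topology

lemma aux_expMeasure_Ioi {ρ : ℝ} (hρ : 0 < ρ) {x : ℝ} (hx : 0 ≤ x) :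
    expMeasure ρ (Set.Ioi x) = ENNReal.ofReal (Real.exp (-(ρ * x))) := by
  have hP : IsProbabilityMeasure (expMeasure ρ) := isProbabilityMeasure_expMeasure hρ
  have hcdf : cdf (expMeasure ρ) x = 1 - Real.exp (-(ρ * x)) := by
    have h := cdf_expMeasure_eq hρ x
    rw [if_pos hx] at h
    exact h
  have hIic : expMeasure ρ (Set.Iic x) = ENNReal.ofReal (1 - Real.exp (-(ρ * x))) := by
    rw [← ofReal_cdf, hcdf]
  have hcompl : Set.Ioi x = (Set.Iic x)ᶜ := by simp
  have hle1 : Real.exp (-(ρ * x)) ≤ 1 := by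
    rw [Real.exp_le_one_iff]
    nlinarith
  rw [hcompl, prob_compl_eq_one_sub measurableSet_Iic, hIic]
  have hkey : ENNReal.ofReal (Real.exp (-(ρ * x))) =
      ENNReal.ofReal 1 - ENNReal.ofReal (1 - Real.exp (-(ρ * x))) := by
    rw [← ENNReal.ofReal_sub _ (by linarith : (0:ℝ) ≤ 1 - Real.exp (-(ρ * x)))]
    congr 1; ring
  rw [hkey, ENNReal.ofReal_one]

lemma aux_geom_sum {c : ℝ} (hc : 0 < c) (t : ℝ) (K : ℕ) :
    ∑ i ∈ Finset.Icc 1 K, Real.exp (-(c * (t - (i : ℝ)))) =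
      (Real.exp c / (Real.exp c - 1)) *
        (Real.exp (-(c * (t - (K : ℝ)))) - Real.exp (-(c * t))) := by
  have hE : 1 < Real.exp c := by
    have := Real.add_one_le_exp c; linarith
  have hE0 : Real.exp c - 1 ≠ 0 := by linarith
  induction K with
  | zero => simp
  | succ K ih =>
    rw [Finset.sum_Icc_succ_top (by omega : 1 ≤ K + 1), ih]
    have h1 : Real.exp (-(c * (t - ((K + 1 : ℕ) : ℝ)))) =
        Real.exp (-(c * (t - (K : ℝ)))) * Real.exp c := by
      rw [← Real.exp_add]; push_cast; ring_nf
    rw [h1]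
    push_cast
    field_simp
    ring

/-- Let `k_n = ⌊n(1 - a log n / n)⌋` with `a > 1/(λr)`, and let `Y_{i,n}` be
independent exponential spacings of rate `(n-i)λ`. The probability that some
spacing among `i = 1,…,k_n - 1` exceeds `r` is at most
`∑_{i=1}^{k_n-1} e^{-λr(n-i)} ≤ (e^{λr}/(e^{λr}-1))(e^{-λr(n-k_n)} - e^{-λrn})`,
which is summable in `n`; hence by Borel–Cantelli the restriction of the
exponential RGG to its first `k_n` ordered points is a.s. eventually connected. -/
theorem restricted_graph_eventually_connected
    {Ω : Type*} [MeasurableSpace Ω] (μ : Measure Ω) [IsProbabilityMeasure μ]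
    (lam r a : ℝ) (hlam : 0 < lam) (hr : 0 < r) (ha : 1 / (lam * r) < a)
    (Y : ℕ → ℕ → Ω → ℝ) (hmeas : ∀ n i, Measurable (Y n i))
    (hindep : ∀ n : ℕ,
      iIndepFun (fun i : Fin (n - 1) => Y n ((i : ℕ) + 1)) μ)
    (hdist : ∀ n : ℕ, ∀ i ∈ Finset.Icc 1 (n - 1),
      μ.map (Y n i) = expMeasure (((n : ℝ) - (i : ℝ)) * lam))
    (k : ℕ → ℕ) (hk : ∀ n : ℕ, k n = ⌊(n : ℝ) * (1 - a * Real.log n / n)⌋₊) :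
    (∀ n : ℕ, μ {ω | ∃ i ∈ Finset.Icc 1 (k n - 1), r < Y n i ω} ≤
      ENNReal.ofReal
        (∑ i ∈ Finset.Icc 1 (k n - 1), Real.exp (-(lam * r * ((n : ℝ) - (i : ℝ)))))) ∧
    (∀ n : ℕ,
      ∑ i ∈ Finset.Icc 1 (k n - 1), Real.exp (-(lam * r * ((n : ℝ) - (i : ℝ)))) ≤
        (Real.exp (lam * r) / (Real.exp (lam * r) - 1)) *
          (Real.exp (-(lam * r * ((n : ℝ) - (k n : ℝ)))) - Real.exp (-(lam * r * n)))) ∧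
    Summable (fun n : ℕ =>
      (Real.exp (lam * r) / (Real.exp (lam * r) - 1)) *
        (Real.exp (-(lam * r * ((n : ℝ) - (k n : ℝ)))) - Real.exp (-(lam * r * n)))) ∧
    ∀ᵐ ω ∂μ, ∃ N : ℕ, ∀ n ≥ N, ∀ i ∈ Finset.Icc 1 (k n - 1), Y n i ω ≤ r := by
  have hc : 0 < lam * r := mul_pos hlam hr
  have ha0 : 0 < a := lt_trans (by positivity) ha
  have hE : 1 < Real.exp (lam * r) := by
    have := Real.add_one_le_exp (lam * r); linarith
  have hcoeff : 0 ≤ Real.exp (lam * r) / (Real.exp (lam * r) - 1) :=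
    div_nonneg (Real.exp_pos _).le (by linarith)
  -- k n ≤ n
  have hkn : ∀ n : ℕ, k n ≤ n := by
    intro n
    rw [hk n]
    have hq : 0 ≤ a * Real.log n / n :=
      div_nonneg (mul_nonneg ha0.le (Real.log_natCast_nonneg n)) (Nat.cast_nonneg n)
    have hle : (n : ℝ) * (1 - a * Real.log n / n) ≤ (n : ℝ) := by nlinarith [Nat.cast_nonneg (α := ℝ) n]
    calc ⌊(n : ℝ) * (1 - a * Real.log n / n)⌋₊ ≤ ⌊(n : ℝ)⌋₊ := Nat.floor_le_floor hle
      _ = n := Nat.floor_natCast n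
  -- Part 1
  have part1 : ∀ n : ℕ, μ {ω | ∃ i ∈ Finset.Icc 1 (k n - 1), r < Y n i ω} ≤
      ENNReal.ofReal
        (∑ i ∈ Finset.Icc 1 (k n - 1), Real.exp (-(lam * r * ((n : ℝ) - (i : ℝ))))) := by
    intro n
    have hset : {ω | ∃ i ∈ Finset.Icc 1 (k n - 1), r < Y n i ω} =
        ⋃ i ∈ Finset.Icc 1 (k n - 1), Y n i ⁻¹' Set.Ioi r := by
      ext ω; simp
    rw [hset, ENNReal.ofReal_sum_of_nonneg (fun i _ => (Real.exp_pos _).le)]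
    refine le_trans (measure_biUnion_finset_le _ _) (Finset.sum_le_sum fun i hi => ?_)
    obtain ⟨hi1, hi2⟩ := Finset.mem_Icc.mp hi
    have hkn1 : 1 ≤ k n := by omega
    have hknn := hkn n
    have hin : i ≤ n - 1 := by omega
    have hilt : (i : ℝ) < (n : ℝ) := by exact_mod_cast (by omega : i < n)
    have hrate : 0 < ((n : ℝ) - (i : ℝ)) * lam := mul_pos (by linarith) hlam
    have hmap := hdist n i (Finset.mem_Icc.mpr ⟨hi1, hin⟩)
    rw [show μ (Y n i ⁻¹' Set.Ioi r) = (μ.map (Y n i)) (Set.Ioi r) from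
      (Measure.map_apply (hmeas n i) measurableSet_Ioi).symm, hmap,
      aux_expMeasure_Ioi hrate hr.le]
    apply le_of_eq; congr 1; ring
  -- Part 2
  have part2 : ∀ n : ℕ,
      ∑ i ∈ Finset.Icc 1 (k n - 1), Real.exp (-(lam * r * ((n : ℝ) - (i : ℝ)))) ≤
        (Real.exp (lam * r) / (Real.exp (lam * r) - 1)) *
          (Real.exp (-(lam * r * ((n : ℝ) - (k n : ℝ)))) - Real.exp (-(lam * r * n))) := by
    intro n
    have hgeom := aux_geom_sum hc (n : ℝ) (k n - 1)
    rw [show (fun i : ℕ => Real.exp (-(lam * r * ((n : ℝ) - (i : ℝ))))) =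
        (fun i : ℕ => Real.exp (-(lam * r * ((n : ℝ) - (i : ℝ))))) from rfl]
    calc ∑ i ∈ Finset.Icc 1 (k n - 1), Real.exp (-(lam * r * ((n : ℝ) - (i : ℝ))))
        = ∑ i ∈ Finset.Icc 1 (k n - 1), Real.exp (-(lam * r * ((n : ℝ) - (i : ℝ)))) := rfl
      _ = (Real.exp (lam * r) / (Real.exp (lam * r) - 1)) *
          (Real.exp (-(lam * r * ((n : ℝ) - ((k n - 1 : ℕ) : ℝ)))) -
            Real.exp (-(lam * r * (n : ℝ)))) := hgeom
      _ ≤ _ := by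
          apply mul_le_mul_of_nonneg_left _ hcoeff
          apply sub_le_sub_right
          apply Real.exp_le_exp.mpr
          have hcast : ((k n - 1 : ℕ) : ℝ) ≤ (k n : ℝ) := by
            exact_mod_cast Nat.sub_le (k n) 1
          nlinarith
  -- Part 3
  have hca : 1 < lam * r * a := by
    rw [div_lt_iff₀ hc] at ha; linarith
  have hsum_exp : Summable (fun n : ℕ => Real.exp (-(lam * r * ((n : ℝ) - (k n : ℝ))))) := by
    have hlog : ∀ᶠ x : ℝ in atTop, a * Real.log x ≤ x := by
      have h := Real.isLittleO_log_id_atTop.bound (show (0 : ℝ) < 1 / a by positivity)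
      filter_upwards [h, eventually_ge_atTop (1 : ℝ)] with x hx hx1
      simp only [id_eq, Real.norm_eq_abs] at hx
      rw [abs_of_nonneg (Real.log_nonneg hx1),
        abs_of_nonneg (by linarith : (0:ℝ) ≤ x)] at hx
      calc a * Real.log x ≤ a * (1 / a * x) := mul_le_mul_of_nonneg_left hx ha0.le
        _ = x := by field_simp
    have hbound : ∀ᶠ n : ℕ in atTop,
        Real.exp (-(lam * r * ((n : ℝ) - (k n : ℝ)))) ≤ (n : ℝ) ^ (-(lam * r * a)) := by
      filter_upwards [tendsto_natCast_atTop_atTop.eventually hlog,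
        eventually_ge_atTop 1] with n hn hn1
      have hnpos : (0 : ℝ) < (n : ℝ) := by exact_mod_cast hn1
      have hx : (n : ℝ) * (1 - a * Real.log n / n) = (n : ℝ) - a * Real.log n := by
        field_simp
      have hx0 : 0 ≤ (n : ℝ) - a * Real.log n := by linarith
      have hfl : (k n : ℝ) ≤ (n : ℝ) - a * Real.log n := by
        rw [hk n, hx]
        exact Nat.floor_le hx0
      have h1 : Real.exp (-(lam * r * ((n : ℝ) - (k n : ℝ)))) ≤
          Real.exp (-(lam * r * (a * Real.log n))) := by
        apply Real.exp_le_exp.mpr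
        nlinarith
      have h2 : (n : ℝ) ^ (-(lam * r * a)) = Real.exp (-(lam * r * (a * Real.log n))) := by
        rw [Real.rpow_def_of_pos hnpos]
        ring_nf
      rw [h2]
      exact h1
    refine summable_of_isBigO_nat
      (Real.summable_nat_rpow.mpr (by linarith : -(lam * r * a) < -1)) ?_
    refine Asymptotics.IsBigO.of_bound 1 ?_
    filter_upwards [hbound] with n hn
    rw [one_mul, Real.norm_eq_abs, Real.norm_eq_abs, abs_of_nonneg (Real.exp_pos _).le,
      abs_of_nonneg (Real.rpow_nonneg (Nat.cast_nonneg n) _)]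
    exact hn
  have hsum_cn : Summable (fun n : ℕ => Real.exp (-(lam * r * (n : ℝ)))) := by
    have hh : ∀ n : ℕ, Real.exp (-(lam * r * (n : ℝ))) = (Real.exp (-(lam * r))) ^ n := by
      intro n
      rw [← Real.exp_nat_mul]
      ring_nf
    simp only [hh]
    exact summable_geometric_of_lt_one (Real.exp_pos _).le
      (Real.exp_lt_one_iff.mpr (by linarith))
  have part3 : Summable (fun n : ℕ =>
      (Real.exp (lam * r) / (Real.exp (lam * r) - 1)) *
        (Real.exp (-(lam * r * ((n : ℝ) - (k n : ℝ)))) - Real.exp (-(lam * r * n)))) :=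
    (hsum_exp.sub hsum_cn).mul_left _
  refine ⟨part1, part2, part3, ?_⟩
  -- Part 4 : Borel–Cantelli
  set B : ℕ → ℝ := fun n =>
    (Real.exp (lam * r) / (Real.exp (lam * r) - 1)) *
      (Real.exp (-(lam * r * ((n : ℝ) - (k n : ℝ)))) - Real.exp (-(lam * r * n))) with hB
  have hB0 : ∀ n, 0 ≤ B n := by
    intro n
    apply mul_nonneg hcoeff
    rw [sub_nonneg]
    apply Real.exp_le_exp.mpr
    have : (0 : ℝ) ≤ (k n : ℝ) := Nat.cast_nonneg _
    nlinarith
  set s : ℕ → Set Ω := fun n => {ω | ∃ i ∈ Finset.Icc 1 (k n - 1), r < Y n i ω} with hs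
  have htsum : (∑' n, μ (s n)) ≠ ⊤ := by
    have hle : (∑' n, μ (s n)) ≤ ∑' n, ENNReal.ofReal (B n) :=
      ENNReal.tsum_le_tsum fun n =>
        (part1 n).trans (ENNReal.ofReal_le_ofReal (part2 n))
    have heq : (∑' n, ENNReal.ofReal (B n)) = ENNReal.ofReal (∑' n, B n) :=
      (ENNReal.ofReal_tsum_of_nonneg hB0 part3).symm
    exact ne_top_of_le_ne_top (by rw [heq]; exact ENNReal.ofReal_ne_top) hle
  filter_upwards [MeasureTheory.ae_eventually_notMem htsum] with ω hω
  rw [eventually_atTop] at hω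
  obtain ⟨N, hN⟩ := hω
  refine ⟨N, fun n hn i hi => ?_⟩
  by_contra hlt
  exact hN n hn ⟨i, hi, lt_of_not_ge hlt⟩
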